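/- Let A be a finite-dimensional evolution algebra over a field F with natural basis B = {e_1,...,e_n} and structure matrix M_B(A) (whose (k,i) entry w_{ki} satisfies e_i² = Σ_k w_{ki} e_k). If B' = {f_1,...,f_n} is another natural basis of A with change of basis matrix C = (c_{ij}) (i.e. f_j = Σ_i c_{ij} e_i), then M_{B'}(A) = C⁻¹ · M_B(A) · C^{(2)}, where C^{(2)} denotes the matrix with entries c_{ij}². -/

import Mathlib

/-- **Change of natural basis for evolution algebras.**
If `e` and `f` are natural bases of an evolution algebra `A` with structure
matrices `M` and `M'`, and `C` is the change of basis matrix (`f j = ∑ i, C i j • e i`),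
then `M' = C⁻¹ * M * C^{(2)}` where `C^{(2)}` has entries `c_{ij}²`. -/
theorem stmt_0 {F : Type*} [Field F] {A : Type*} [NonUnitalNonAssocRing A]
    [Module F A] [SMulCommClass F A A] [IsScalarTower F A A]
    {n : ℕ} (e f : Module.Basis (Fin n) F A)
    (he : ∀ i j : Fin n, i ≠ j → e i * e j = 0)
    (hf : ∀ i j : Fin n, i ≠ j → f i * f j = 0)
    (M M' C : Matrix (Fin n) (Fin n) F)
    (hM : ∀ i, e i * e i = ∑ k, M k i • e k)
    (hM' : ∀ j, f j * f j = ∑ k, M' k j • f k)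
    (hC : ∀ j, f j = ∑ i, C i j • e i) :
    M' = C⁻¹ * M * C.map (· ^ 2) := by
  classical
  have hCmat : C = e.toMatrix f := by
    ext i j
    rw [Module.Basis.toMatrix_apply, hC j]
    exact (congrFun (e.repr_sum_self fun i => C i j) i).symm
  have hinv : Invertible C := hCmat ▸ e.invertibleToMatrix f
  have key : C * M' = M * C.map (· ^ 2) := by
    have h1 : ∀ j, f j * f j = ∑ k, (C * M') k j • e k := by
      intro j
      rw [hM' j]
      simp only [hC, Finset.smul_sum, smul_smul]
      rw [Finset.sum_comm]
      refine Finset.sum_congr rfl fun i _ => ?_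
      rw [Matrix.mul_apply, Finset.sum_smul]
      exact Finset.sum_congr rfl fun l _ => by rw [mul_comm]
    have h2 : ∀ j, f j * f j = ∑ k, (M * C.map (· ^ 2)) k j • e k := by
      intro j
      rw [hC j, Finset.sum_mul_sum]
      simp only [smul_mul_assoc, mul_smul_comm, smul_smul]
      have hd : ∀ i ∈ Finset.univ, (∑ i' : Fin n, (C i' j * C i j) • (e i * e i'))
          = (C i j ^ 2) • (e i * e i) := by
        intro i _
        rw [Finset.sum_eq_single i]
        · rw [sq]
        · intro b _ hb
          rw [he i b (fun h => hb h.symm), smul_zero]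
        · intro h; exact absurd (Finset.mem_univ i) h
      rw [Finset.sum_congr rfl hd]
      simp only [hM, Finset.smul_sum, smul_smul]
      rw [Finset.sum_comm]
      refine Finset.sum_congr rfl fun k _ => ?_
      rw [Matrix.mul_apply, Finset.sum_smul]
      refine Finset.sum_congr rfl fun i _ => ?_
      rw [Matrix.map_apply, mul_comm]
    ext k j
    have l1 : ⇑(e.repr (f j * f j)) = fun k => (C * M') k j := by
      rw [h1 j]; exact e.repr_sum_self _
    have l2 : ⇑(e.repr (f j * f j)) = fun k => (M * C.map (· ^ 2)) k j := by
      rw [h2 j]; exact e.repr_sum_self _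
    exact congrFun (l1.symm.trans l2) k
  calc M' = C⁻¹ * (C * M') := by
        rw [← Matrix.mul_assoc, Matrix.inv_mul_of_invertible, Matrix.one_mul]
    _ = C⁻¹ * M * C.map (· ^ 2) := by rw [key, Matrix.mul_assoc]
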